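/- Cokernels in the category of mixed Hodge structures: let f : (V, W, F) → (V', W', F') be a morphism of mixed Hodge structures, let Q := V' / f(V) with quotient map π : V' → Q, and identify Q_ℂ with V'_ℂ / f_ℂ(V_ℂ) with quotient map π_ℂ. Then the induced filtrations W^Q_n := π(W'_n) on Q and F^p_Q := π_ℂ(F'^p) on Q_ℂ define a mixed Hodge structure on Q. -/

import Mathlib

open scoped TensorProduct

private lemma sigmaC_aux (V : Type*) [AddCommGroup V] [Module ℝ V] (c : ℂ) (x : ℂ ⊗[ℝ] V) :
    TensorProduct.map Complex.conjAe.toLinearMap LinearMap.id (c • x) =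
      (starRingEnd ℂ) c • TensorProduct.map Complex.conjAe.toLinearMap LinearMap.id x := by
  induction x using TensorProduct.induction_on with
  | zero => simp
  | tmul z v => simp [TensorProduct.smul_tmul', smul_eq_mul, map_mul]
  | add x y hx hy => simp only [smul_add, map_add, hx, hy]

/-- The conjugation involution `σ` of the complexification `ℂ ⊗[ℝ] V`,
as a `conj`-semilinear map. -/
noncomputable def sigmaC (V : Type*) [AddCommGroup V] [Module ℝ V] :
    (ℂ ⊗[ℝ] V) →ₛₗ[starRingEnd ℂ] (ℂ ⊗[ℝ] V) where
  toFun := TensorProduct.map Complex.conjAe.toLinearMap LinearMap.id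
  map_add' x y := map_add _ x y
  map_smul' c x := sigmaC_aux V c x

/-- A mixed Hodge structure on a real vector space `V`: an increasing, bounded, exhaustive
weight filtration `W` of `V` by real subspaces and a decreasing, bounded, exhaustive Hodge
filtration `F` of `V_ℂ = ℂ ⊗[ℝ] V` by complex subspaces, such that for every `n` the
filtration induced by `F` on `Gr^W_n = W_n / W_{n-1}` is a Hodge filtration of weight `n`.

Identifying the complexification of `Gr^W_n` with `(W_n)_ℂ / (W_{n-1})_ℂ` (where
`(W_n)_ℂ := (W n).baseChange ℂ ⊆ V_ℂ`), the Hodge filtration condition of weight `n` on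
`Gr^W_n` — namely `F^p(Gr^W_n)_ℂ ⊕ σ(F^{n-p+1}(Gr^W_n)_ℂ) = (Gr^W_n)_ℂ` for all `p`, where
`F^p(Gr^W_n)_ℂ` is the image of `F^p ⊓ (W_n)_ℂ` — is expressed below by pulling back along
the quotient map `(W_n)_ℂ → (W_n)_ℂ / (W_{n-1})_ℂ`: the first displayed equation is the
disjointness of the two images in the quotient, the second their spanning of the quotient. -/
def IsMixedHodgeStructure (V : Type*) [AddCommGroup V] [Module ℝ V]
    (W : ℤ → Submodule ℝ V) (F : ℤ → Submodule ℂ (ℂ ⊗[ℝ] V)) : Prop :=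
  Monotone W ∧
  (∃ a : ℤ, ∀ n ≤ a, W n = ⊥) ∧
  (∃ b : ℤ, ∀ n ≥ b, W n = ⊤) ∧
  (∀ p : ℤ, F (p + 1) ≤ F p) ∧
  (∃ a : ℤ, ∀ p ≤ a, F p = ⊤) ∧
  (∃ b : ℤ, ∀ p ≥ b, F p = ⊥) ∧
  (∀ n p : ℤ,
    ((F p ⊓ (W n).baseChange ℂ) ⊔ (W (n - 1)).baseChange ℂ) ⊓
        (((F (n - p + 1) ⊓ (W n).baseChange ℂ).map (sigmaC V)) ⊔ (W (n - 1)).baseChange ℂ)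
      = (W (n - 1)).baseChange ℂ ∧
    (F p ⊓ (W n).baseChange ℂ) ⊔ ((F (n - p + 1) ⊓ (W n).baseChange ℂ).map (sigmaC V))
        ⊔ (W (n - 1)).baseChange ℂ
      = (W n).baseChange ℂ)

section Prelim

instance : RingHomSurjective (starRingEnd ℂ) := ⟨fun y => ⟨(starRingEnd ℂ) y, Complex.conj_conj y⟩⟩

variable {V V' : Type*} [AddCommGroup V] [Module ℝ V] [AddCommGroup V'] [Module ℝ V']

lemma sigmaC_tmul (z : ℂ) (v : V) : sigmaC V (z ⊗ₜ[ℝ] v) = (starRingEnd ℂ) z ⊗ₜ[ℝ] v := rfl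

lemma sigmaC_invol (x : ℂ ⊗[ℝ] V) : sigmaC V (sigmaC V x) = x := by
  induction x using TensorProduct.induction_on with
  | zero => simp
  | tmul z v => rw [sigmaC_tmul, sigmaC_tmul, Complex.conj_conj]
  | add a b ha hb => rw [map_add, map_add, ha, hb]

lemma sigmaC_baseChange_comm (g : V →ₗ[ℝ] V') (x : ℂ ⊗[ℝ] V) :
    sigmaC V' (g.baseChange ℂ x) = g.baseChange ℂ (sigmaC V x) := by
  induction x using TensorProduct.induction_on with
  | zero => simp
  | tmul z v => rw [LinearMap.baseChange_tmul, sigmaC_tmul, sigmaC_tmul, LinearMap.baseChange_tmul]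
  | add a b ha hb => simp only [map_add, ha, hb]

lemma sigmaC_mem_baseChange {S : Submodule ℝ V} {x : ℂ ⊗[ℝ] V} (hx : x ∈ S.baseChange ℂ) :
    sigmaC V x ∈ S.baseChange ℂ := by
  have hx' : x ∈ Submodule.span ℂ ((S.map (TensorProduct.mk ℝ ℂ V 1) : Submodule ℝ (ℂ ⊗[ℝ] V)) :
      Set (ℂ ⊗[ℝ] V)) := by rw [← Submodule.baseChange_eq_span]; exact hx
  refine Submodule.span_induction ?_ ?_ ?_ ?_ hx'
  · rintro y hy
    obtain ⟨s, hs, rfl⟩ := hy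
    show sigmaC V ((TensorProduct.mk ℝ ℂ V 1) s) ∈ _
    rw [TensorProduct.mk_apply, sigmaC_tmul, map_one]
    exact Submodule.tmul_mem_baseChange_of_mem 1 hs
  · simp
  · intro a b _ _ ha hb; rw [map_add]; exact Submodule.add_mem _ ha hb
  · intro c a _ ha; rw [map_smulₛₗ]; exact Submodule.smul_mem _ _ ha

lemma baseChange_mono' {S T : Submodule ℝ V} (h : S ≤ T) : S.baseChange ℂ ≤ T.baseChange ℂ := by
  rw [Submodule.baseChange_eq_span, Submodule.baseChange_eq_span]
  refine Submodule.span_mono ?_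
  intro x hx
  obtain ⟨v, hv, rfl⟩ := Submodule.mem_map.mp hx
  exact Submodule.mem_map.mpr ⟨v, h hv, rfl⟩

lemma baseChange_map_comm (g : V →ₗ[ℝ] V') (S : Submodule ℝ V) :
    (S.map g).baseChange ℂ = (S.baseChange ℂ).map (g.baseChange ℂ) := by
  apply le_antisymm
  · rw [Submodule.baseChange_eq_span, Submodule.span_le]
    rintro x hx
    obtain ⟨-, ⟨v, hv, rfl⟩, rfl⟩ := hx
    refine ⟨1 ⊗ₜ v, Submodule.tmul_mem_baseChange_of_mem 1 hv, ?_⟩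
    rw [LinearMap.baseChange_tmul]; rfl
  · rw [Submodule.map_le_iff_le_comap, Submodule.baseChange_eq_span, Submodule.span_le]
    rintro x hx
    obtain ⟨v, hv, rfl⟩ := hx
    simp only [SetLike.mem_coe, Submodule.mem_comap, TensorProduct.mk_apply,
      LinearMap.baseChange_tmul]
    exact Submodule.tmul_mem_baseChange_of_mem 1 ⟨v, hv, rfl⟩

lemma baseChange_surj (g : V →ₗ[ℝ] V') (hg : Function.Surjective g) :
    Function.Surjective (g.baseChange ℂ) := by
  intro x
  induction x using TensorProduct.induction_on with
  | zero => exact ⟨0, map_zero _⟩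
  | tmul z v' =>
    obtain ⟨v, rfl⟩ := hg v'
    exact ⟨z ⊗ₜ v, by rw [LinearMap.baseChange_tmul]⟩
  | add a b ha hb =>
    obtain ⟨a', rfl⟩ := ha; obtain ⟨b', rfl⟩ := hb
    exact ⟨a' + b', map_add _ _ _⟩

lemma ker_baseChange_mkQ (f : V →ₗ[ℝ] V') :
    LinearMap.ker ((LinearMap.range f).mkQ.baseChange ℂ) = LinearMap.range (f.baseChange ℂ) := by
  have hex := lTensor_exact ℂ (LinearMap.exact_map_mkQ_range f) (Submodule.mkQ_surjective _)
  ext x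
  have h1 : (LinearMap.range f).mkQ.baseChange ℂ x
      = LinearMap.lTensor ℂ (LinearMap.range f).mkQ x :=
    congrFun (LinearMap.baseChange_eq_ltensor _) x
  have h2 : ∀ y, f.baseChange ℂ y = LinearMap.lTensor ℂ f y :=
    fun y => congrFun (LinearMap.baseChange_eq_ltensor _) y
  simp only [LinearMap.mem_ker, LinearMap.mem_range, h1, h2]
  exact hex x

end Prelim

section Utils

variable {R : Type*} [Ring R] {M : Type*} [AddCommGroup M] [Module R M] {ι : Type*}

lemma mem_biSup_finsupp {C : ι → Prop} {J : ι → Submodule R M} {x : M}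
    (hx : x ∈ ⨆ i, ⨆ (_ : C i), J i) :
    ∃ g : ι →₀ M, (∀ i, g i ∈ J i) ∧ (∀ i, g i ≠ 0 → C i) ∧ (g.sum fun _ v => v) = x := by
  classical
  obtain ⟨g, hg, hsum⟩ := (Submodule.mem_iSup_iff_exists_finsupp _ _).mp hx
  refine ⟨g, fun i => ?_, fun i hi => ?_, hsum⟩
  · by_cases h : C i
    · have := hg i; rwa [iSup_pos h] at this
    · have h0 : g i = 0 := by have := hg i; rwa [iSup_neg h, Submodule.mem_bot] at this
      rw [h0]; exact Submodule.zero_mem _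
  · by_cases h : C i
    · exact h
    · have h0 : g i = 0 := by have := hg i; rwa [iSup_neg h, Submodule.mem_bot] at this
      exact absurd h0 hi

/-- Independence of a family of submodules, in the form we use. -/
def SubIndep (J : ι → Submodule R M) : Prop :=
  ∀ i x, x ∈ J i → x ∈ (⨆ j, ⨆ (_ : j ≠ i), J j) → x = 0

lemma biSup_mono_prop {C D : ι → Prop} (J : ι → Submodule R M) (h : ∀ i, C i → D i) :
    (⨆ i, ⨆ (_ : C i), J i) ≤ ⨆ i, ⨆ (_ : D i), J i :=
  iSup_le fun i => iSup_le fun hi => le_iSup_of_le i (le_iSup_of_le (h i hi) le_rfl)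

lemma le_biSup_of_prop {C : ι → Prop} (J : ι → Submodule R M) (i : ι) (h : C i) :
    J i ≤ ⨆ i, ⨆ (_ : C i), J i :=
  le_iSup_of_le i (le_iSup_of_le h le_rfl)

lemma mem_biSup_of_prop {C : ι → Prop} {J : ι → Submodule R M} {x : M} (i : ι) (h : C i)
    (hx : x ∈ J i) : x ∈ ⨆ i, ⨆ (_ : C i), J i :=
  Submodule.mem_iSup_of_mem i (Submodule.mem_iSup_of_mem h hx)

lemma mem_biSup_mono {C D : ι → Prop} {J : ι → Submodule R M} {x : M}
    (h : ∀ i, C i → D i) (hx : x ∈ ⨆ i, ⨆ (_ : C i), J i) : x ∈ ⨆ i, ⨆ (_ : D i), J i :=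
  biSup_mono_prop J h hx

lemma SubIndep.eq_zero_of_disjoint {J : ι → Submodule R M} (h : SubIndep J) {C D : ι → Prop}
    (hCD : ∀ i, C i → D i → False) {x : M}
    (hxC : x ∈ ⨆ i, ⨆ (_ : C i), J i) (hxD : x ∈ ⨆ i, ⨆ (_ : D i), J i) : x = 0 := by
  classical
  obtain ⟨g, hgJ, hgC, hsum⟩ := mem_biSup_finsupp hxC
  have hcomp : ∀ i₀, g i₀ = 0 := by
    intro i₀
    by_cases hi₀ : g i₀ = 0
    · exact hi₀
    have hC : C i₀ := hgC i₀ hi₀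
    have hmem : i₀ ∈ g.support := Finsupp.mem_support_iff.mpr hi₀
    have hrest : ∑ i ∈ g.support.erase i₀, g i ∈ ⨆ j, ⨆ (_ : j ≠ i₀), J j := by
      refine Submodule.sum_mem _ fun i hi => ?_
      exact mem_biSup_of_prop i (Finset.ne_of_mem_erase hi) (hgJ i)
    have hxmem : x ∈ ⨆ j, ⨆ (_ : j ≠ i₀), J j := by
      refine mem_biSup_mono (fun j hj => ?_) hxD
      exact fun heq => hCD i₀ hC (heq ▸ hj)
    have heq : g i₀ = x - ∑ i ∈ g.support.erase i₀, g i := by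
      rw [← hsum, Finsupp.sum, ← Finset.add_sum_erase _ _ hmem]
      abel
    have : g i₀ ∈ ⨆ j, ⨆ (_ : j ≠ i₀), J j := heq ▸ sub_mem hxmem hrest
    exact absurd (h i₀ _ (hgJ i₀) this) hi₀
  rw [← hsum, Finsupp.sum]
  exact Finset.sum_eq_zero fun i _ => hcomp i

lemma SubIndep.inf_biSup {J : ι → Submodule R M} (h : SubIndep J) {C D : ι → Prop}
    {x : M} (hxC : x ∈ ⨆ i, ⨆ (_ : C i), J i) (hxD : x ∈ ⨆ i, ⨆ (_ : D i), J i) :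
    x ∈ ⨆ i, ⨆ (_ : C i ∧ D i), J i := by
  classical
  obtain ⟨g, hgJ, hgC, hsum⟩ := mem_biSup_finsupp hxC
  have hsplit := Finset.sum_filter_add_sum_filter_not g.support (fun i => D i) (fun i => g i)
  set z := ∑ i ∈ g.support.filter (fun i => ¬ D i), g i with hz
  have hzC : z ∈ ⨆ i, ⨆ (_ : C i ∧ ¬ D i), J i := by
    refine Submodule.sum_mem _ fun i hi => ?_
    obtain ⟨hisupp, hiD⟩ := Finset.mem_filter.mp hi
    exact mem_biSup_of_prop i ⟨hgC i (Finsupp.mem_support_iff.mp hisupp), hiD⟩ (hgJ i)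
  have hgood : ∑ i ∈ g.support.filter (fun i => D i), g i ∈ ⨆ i, ⨆ (_ : C i ∧ D i), J i := by
    refine Submodule.sum_mem _ fun i hi => ?_
    obtain ⟨hisupp, hiD⟩ := Finset.mem_filter.mp hi
    exact mem_biSup_of_prop i ⟨hgC i (Finsupp.mem_support_iff.mp hisupp), hiD⟩ (hgJ i)
  have hzD : z ∈ ⨆ i, ⨆ (_ : D i), J i := by
    have : z = x - ∑ i ∈ g.support.filter (fun i => D i), g i := by
      rw [← hsum, Finsupp.sum, ← hsplit]; abel
    rw [this]
    refine sub_mem hxD (Submodule.sum_mem _ fun i hi => ?_)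
    exact mem_biSup_of_prop i (Finset.mem_filter.mp hi).2 (hgJ i)
  have hz0 : z = 0 := h.eq_zero_of_disjoint (fun i hc hd => hc.2 hd) hzC hzD
  have : x = ∑ i ∈ g.support.filter (fun i => D i), g i := by
    rw [← hsum, Finsupp.sum, ← hsplit, hz0, add_zero]
  rw [this]; exact hgood

lemma SubIndep.map_of_ker {N : Type*} [AddCommGroup N] [Module R N]
    {I : ι → Submodule R M} (hI : SubIndep I) (π : M →ₗ[R] N) (K : ι → Submodule R M)
    (hK : ∀ i, K i ≤ I i) (hker : LinearMap.ker π ≤ ⨆ i, K i)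
    (hK0 : ∀ i, K i ≤ LinearMap.ker π) :
    SubIndep (fun i => (I i).map π) := by
  intro i x hx hsup
  obtain ⟨u, hu, rfl⟩ := hx
  have hsup' : π u ∈ ((⨆ j, ⨆ (_ : j ≠ i), I j).map π) := by
    have : (⨆ j, ⨆ (_ : j ≠ i), (I j).map π) = (⨆ j, ⨆ (_ : j ≠ i), I j).map π := by
      rw [Submodule.map_iSup]
      exact iSup_congr fun j => (Submodule.map_iSup _ _).symm
    rwa [this] at hsup
  obtain ⟨v, hv, hvu⟩ := hsup'
  have huv : u - v ∈ ⨆ j, K j := by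
    refine hker ?_
    rw [LinearMap.mem_ker, map_sub, hvu, sub_self]
  have hsplitK : (⨆ j, K j) ≤ K i ⊔ ⨆ j, ⨆ (_ : j ≠ i), K j := by
    refine iSup_le fun j => ?_
    by_cases hj : j = i
    · subst hj; exact le_sup_left
    · exact le_sup_of_le_right (le_biSup_of_prop K j hj)
  obtain ⟨c₁, hc₁, c₂, hc₂, hceq⟩ := Submodule.mem_sup.mp (hsplitK huv)
  have h1 : u - c₁ ∈ I i := sub_mem hu (hK i hc₁)
  have heq2 : u - c₁ = v + c₂ := by
    rw [sub_eq_iff_eq_add.mp hceq.symm]; abel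
  have hKI : (⨆ j, ⨆ (_ : j ≠ i), K j) ≤ ⨆ j, ⨆ (_ : j ≠ i), I j :=
    iSup_le fun j => iSup_le fun hj => (hK j).trans (le_biSup_of_prop I j hj)
  have h2 : u - c₁ ∈ ⨆ j, ⨆ (_ : j ≠ i), I j := heq2 ▸ add_mem hv (hKI hc₂)
  have hz : u = c₁ := sub_eq_zero.mp (hI i _ h1 h2)
  rw [hz]
  exact LinearMap.mem_ker.mp (hK0 i hc₁)

lemma map_biSup {N : Type*} [AddCommGroup N] [Module R N] (g : M →ₗ[R] N) (C : ι → Prop)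
    (P : ι → Submodule R M) :
    (⨆ i, ⨆ (_ : C i), P i).map g = ⨆ i, ⨆ (_ : C i), (P i).map g := by
  rw [Submodule.map_iSup]
  exact iSup_congr fun i => Submodule.map_iSup _ _

end Utils

section Deligne

variable {M : Type*} [AddCommGroup M] [Module ℂ M]

/-- `σ(F q)`. -/
def FsD (σ : M →ₛₗ[starRingEnd ℂ] M) (F : ℤ → Submodule ℂ M) (q : ℤ) : Submodule ℂ M :=
  (F q).map σ

/-- Lower-order part of the Deligne subspace. -/
def DelIlow (σ : M →ₛₗ[starRingEnd ℂ] M) (W F : ℤ → Submodule ℂ M) (p q : ℤ) : Submodule ℂ M :=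
  ⨆ j : ℕ, (FsD σ F (q - 1 - (j : ℤ)) ⊓ W (p + q - 2 - (j : ℤ)))

/-- The Deligne subspace `I^{p,q}`. -/
def DelI (σ : M →ₛₗ[starRingEnd ℂ] M) (W F : ℤ → Submodule ℂ M) (p q : ℤ) : Submodule ℂ M :=
  (F p ⊓ W (p + q)) ⊓ ((FsD σ F q ⊓ W (p + q)) ⊔ DelIlow σ W F p q)

/-- Pullback to `W n` of `F^p(Gr_n)`. -/
def GrA (W F : ℤ → Submodule ℂ M) (n p : ℤ) : Submodule ℂ M := (F p ⊓ W n) ⊔ W (n - 1)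

/-- Pullback to `W n` of `σ(F^q)(Gr_n)`. -/
def GrB (σ : M →ₛₗ[starRingEnd ℂ] M) (W F : ℤ → Submodule ℂ M) (n q : ℤ) : Submodule ℂ M :=
  (FsD σ F q ⊓ W n) ⊔ W (n - 1)

/-- Sum of the Deligne subspaces of total weight at most `m`. -/
def SupDelI (σ : M →ₛₗ[starRingEnd ℂ] M) (W F : ℤ → Submodule ℂ M) (m : ℤ) : Submodule ℂ M :=
  ⨆ ab : ℤ × ℤ, ⨆ (_ : ab.1 + ab.2 ≤ m), DelI σ W F ab.1 ab.2

/-- All hypotheses for the Deligne splitting. -/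
structure DelCtx (σ : M →ₛₗ[starRingEnd ℂ] M) (W F : ℤ → Submodule ℂ M) where
  hs2 : ∀ x, σ (σ x) = x
  hWs : ∀ n x, x ∈ W n → σ x ∈ W n
  hWmono : Monotone W
  hFanti : ∀ ⦃p q : ℤ⦄, p ≤ q → F q ≤ F p
  aW : ℤ
  haW : ∀ n ≤ aW, W n = ⊥
  bW : ℤ
  hbW : ∀ n, bW ≤ n → W n = ⊤
  bF : ℤ
  hbF : ∀ p, bF ≤ p → F p = ⊥
  aF : ℤ
  haF : ∀ p ≤ aF, F p = ⊤
  hodge1 : ∀ n p : ℤ, GrA W F n p ⊓ GrB σ W F n (n - p + 1) ≤ W (n - 1)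
  hodge2 : ∀ n p : ℤ, W n ≤ (F p ⊓ W n) ⊔ ((FsD σ F (n - p + 1) ⊓ W n) ⊔ W (n - 1))

namespace DelCtx

variable {σ : M →ₛₗ[starRingEnd ℂ] M} {W F : ℤ → Submodule ℂ M} (c : DelCtx σ W F)

include c

lemma hFs {q q' : ℤ} (h : q ≤ q') : FsD σ F q' ≤ FsD σ F q := Submodule.map_mono (c.hFanti h)

lemma grA_mono {n p p' : ℤ} (h : p ≤ p') : GrA W F n p' ≤ GrA W F n p :=
  sup_le_sup_right (inf_le_inf_right _ (c.hFanti h)) _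

lemma grB_mono {n q q' : ℤ} (h : q ≤ q') : GrB σ W F n q' ≤ GrB σ W F n q :=
  sup_le_sup_right (inf_le_inf_right _ (c.hFs h)) _

lemma grA_le_W (n p : ℤ) : GrA W F n p ≤ W n :=
  sup_le inf_le_right (c.hWmono (by omega))

lemma grB_le_W (n q : ℤ) : GrB σ W F n q ≤ W n :=
  sup_le inf_le_right (c.hWmono (by omega))

lemma W_le_grA (n p : ℤ) : W (n - 1) ≤ GrA W F n p := le_sup_right

lemma delIlow_le_W (p q : ℤ) : DelIlow σ W F p q ≤ W (p + q - 2) :=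
  iSup_le fun j => inf_le_right.trans (c.hWmono (by omega))

lemma delI_le_F (p q : ℤ) : DelI σ W F p q ≤ F p := inf_le_left.trans inf_le_left

lemma delI_le_W (p q : ℤ) : DelI σ W F p q ≤ W (p + q) := inf_le_left.trans inf_le_right

lemma delI_le_snd (p q : ℤ) :
    DelI σ W F p q ≤ (FsD σ F q ⊓ W (p + q)) ⊔ DelIlow σ W F p q := inf_le_right

lemma delI_le_grA (p q : ℤ) : DelI σ W F p q ≤ GrA W F (p + q) p :=
  inf_le_left.trans le_sup_left

lemma delI_le_grB (p q : ℤ) : DelI σ W F p q ≤ GrB σ W F (p + q) q :=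
  (c.delI_le_snd p q).trans
    (sup_le le_sup_left ((c.delIlow_le_W p q).trans ((c.hWmono (by omega)).trans le_sup_right)))

lemma supDelI_mono {m m' : ℤ} (h : m ≤ m') : SupDelI σ W F m ≤ SupDelI σ W F m' :=
  biSup_mono_prop _ fun ab hab => hab.trans h

lemma supDelI_le_W (m : ℤ) : SupDelI σ W F m ≤ W m :=
  iSup_le fun ab => iSup_le fun hab => (c.delI_le_W ab.1 ab.2).trans (c.hWmono hab)

lemma grAB_bot {n p q : ℤ} (h : n + 1 ≤ p + q) : GrA W F n p ⊓ GrB σ W F n q ≤ W (n - 1) :=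
  le_trans (inf_le_inf_left _ (c.grB_mono (by omega : n - p + 1 ≤ q))) (c.hodge1 n p)

lemma grA_step (n p : ℤ) :
    GrA W F n p ≤ (F (p + 1) ⊓ W n) ⊔ (GrA W F n p ⊓ GrB σ W F n (n - p)) := by
  intro x hx
  have hxW : x ∈ W n := c.grA_le_W n p hx
  have h2 := c.hodge2 n (p + 1) hxW
  have e : n - (p + 1) + 1 = n - p := by omega
  rw [e] at h2
  obtain ⟨a, ha, y, hy, rfl⟩ := Submodule.mem_sup.mp h2
  refine Submodule.mem_sup.mpr ⟨a, ha, y, ?_, rfl⟩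
  have haA : a ∈ GrA W F n p := Submodule.mem_sup_left
    (Submodule.mem_inf.mpr ⟨c.hFanti (by omega) (Submodule.mem_inf.mp ha).1,
      (Submodule.mem_inf.mp ha).2⟩)
  have hyA : y ∈ GrA W F n p := by
    have : y = a + y - a := by abel
    rw [this]
    exact sub_mem hx haA
  exact Submodule.mem_inf.mpr ⟨hyA, hy⟩

lemma grA_dec (n p : ℤ) :
    GrA W F n p ≤
      (⨆ r : ℤ, ⨆ (_ : p ≤ r), (GrA W F n r ⊓ GrB σ W F n (n - r))) ⊔ W (n - 1) := by
  have key : ∀ k : ℕ, ∀ p' : ℤ, c.bF ≤ p' + k →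
      GrA W F n p' ≤
        (⨆ r : ℤ, ⨆ (_ : p' ≤ r), (GrA W F n r ⊓ GrB σ W F n (n - r))) ⊔ W (n - 1) := by
    intro k
    induction k with
    | zero =>
      intro p' hp'
      have hF0 : F p' = ⊥ := c.hbF p' (by omega)
      have : GrA W F n p' = W (n - 1) := by rw [GrA, hF0]; simp
      rw [this]
      exact le_sup_right
    | succ k ih =>
      intro p' hp'
      by_cases h : c.bF ≤ p' + k
      · exact ih p' h
      · refine (c.grA_step n p').trans (sup_le ?_ ?_)
        · refine (le_sup_left.trans (ih (p' + 1) (by push_cast; omega))).trans ?_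
          refine sup_le_sup_right ?_ _
          exact biSup_mono_prop _ fun r hr => by omega
        · exact le_sup_of_le_left (le_biSup_of_prop (fun r => GrA W F n r ⊓ GrB σ W F n (n - r)) p' le_rfl)
  intro x hx
  exact key (c.bF - p).toNat p (by omega) hx

end DelCtx

end Deligne

namespace DelCtx

variable {M : Type*} [AddCommGroup M] [Module ℂ M]
variable {σ : M →ₛₗ[starRingEnd ℂ] M} {W F : ℤ → Submodule ℂ M} (c : DelCtx σ W F)

include c

lemma low_le {p q β ω : ℤ} (hω : ω ≤ p + q) (hβ : ω - β ≤ p - 1) :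
    FsD σ F β ⊓ W ω ≤ (FsD σ F q ⊓ W (p + q)) ⊔ DelIlow σ W F p q := by
  by_cases h : q ≤ β
  · exact le_sup_of_le_left (inf_le_inf (c.hFs h) (c.hWmono hω))
  · push_neg at h
    refine le_sup_of_le_right ?_
    refine le_trans ?_
      (le_iSup (fun j : ℕ => FsD σ F (q - 1 - (j : ℤ)) ⊓ W (p + q - 2 - (j : ℤ)))
        (q - β - 1).toNat)
    have e1 : q - 1 - ((q - β - 1).toNat : ℤ) = β := by omega
    have e2 : p + q - 2 - ((q - β - 1).toNat : ℤ) = p + β - 1 := by omega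
    rw [e1, e2]
    exact inf_le_inf_left _ (c.hWmono (by omega))

lemma sur {n p q : ℤ} (hpq : p + q = n) (hWdec : W (n - 1) ≤ SupDelI σ W F (n - 1)) :
    GrA W F n p ⊓ GrB σ W F n q ≤ DelI σ W F p q ⊔ W (n - 1) := by
  subst hpq
  intro x hx
  obtain ⟨hxA, hxB⟩ := Submodule.mem_inf.mp hx
  obtain ⟨z, hz, w₁, hw₁, rfl⟩ := Submodule.mem_sup.mp hxA
  have hzB : z ∈ GrB σ W F (p + q) q := by
    have : z = z + w₁ - w₁ := by abel
    rw [this]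
    exact sub_mem hxB (Submodule.mem_sup_right hw₁)
  obtain ⟨y, hy, w, hw, hzyw⟩ := Submodule.mem_sup.mp hzB
  have hwS : w ∈ SupDelI σ W F (p + q - 1) := hWdec hw
  classical
  obtain ⟨g, hgJ, hgwt, hgsum⟩ := mem_biSup_finsupp hwS
  set shigh := g.support.filter (fun ab : ℤ × ℤ => p ≤ ab.1) with hshigh
  set slow := g.support.filter (fun ab : ℤ × ℤ => ¬ p ≤ ab.1) with hslow
  have hsplit : ∑ ab ∈ shigh, g ab + ∑ ab ∈ slow, g ab = w := by
    rw [hshigh, hslow, Finset.sum_filter_add_sum_filter_not, ← hgsum, Finsupp.sum]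
  have hhighW : ∑ ab ∈ shigh, g ab ∈ W (p + q - 1) := by
    refine Submodule.sum_mem _ fun ab hab => ?_
    have h2 := hgwt ab (Finsupp.mem_support_iff.mp (Finset.mem_filter.mp hab).1)
    exact c.hWmono h2 (c.delI_le_W ab.1 ab.2 (hgJ ab))
  set z' := z - ∑ ab ∈ shigh, g ab with hz'
  have hz'F : z' ∈ F p := by
    refine sub_mem (Submodule.mem_inf.mp hz).1 (Submodule.sum_mem _ fun ab hab => ?_)
    exact c.hFanti (Finset.mem_filter.mp hab).2 (c.delI_le_F ab.1 ab.2 (hgJ ab))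
  have hz'W : z' ∈ W (p + q) :=
    sub_mem (Submodule.mem_inf.mp hz).2 (c.hWmono (by omega) hhighW)
  have hlow : ∀ ab ∈ slow, g ab ∈ (FsD σ F q ⊓ W (p + q)) ⊔ DelIlow σ W F p q := by
    intro ab hab
    obtain ⟨habs, habp⟩ := Finset.mem_filter.mp hab
    have hwt : ab.1 + ab.2 ≤ p + q - 1 := hgwt ab (Finsupp.mem_support_iff.mp habs)
    have h1 : g ab ∈ (FsD σ F ab.2 ⊓ W (ab.1 + ab.2)) ⊔ DelIlow σ W F ab.1 ab.2 :=
      c.delI_le_snd ab.1 ab.2 (hgJ ab)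
    have hle : (FsD σ F ab.2 ⊓ W (ab.1 + ab.2)) ⊔ DelIlow σ W F ab.1 ab.2 ≤
        (FsD σ F q ⊓ W (p + q)) ⊔ DelIlow σ W F p q := by
      refine sup_le (c.low_le (by omega) (by omega)) (iSup_le fun j => ?_)
      exact c.low_le (by omega) (by omega)
    exact hle h1
  have hz'2 : z' ∈ (FsD σ F q ⊓ W (p + q)) ⊔ DelIlow σ W F p q := by
    have hzeq : z' = y + ∑ ab ∈ slow, g ab := by
      rw [hz', ← hzyw, ← hsplit]; abel
    rw [hzeq]
    exact add_mem (Submodule.mem_sup_left hy) (Submodule.sum_mem _ hlow)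
  have hz'I : z' ∈ DelI σ W F p q :=
    Submodule.mem_inf.mpr ⟨Submodule.mem_inf.mpr ⟨hz'F, hz'W⟩, hz'2⟩
  refine Submodule.mem_sup.mpr ⟨z', hz'I, ∑ ab ∈ shigh, g ab + w₁, add_mem hhighW hw₁, ?_⟩
  rw [hz']; abel

lemma wdec (n : ℤ) : W n ≤ SupDelI σ W F n := by
  have key : ∀ k : ℕ, ∀ m : ℤ, m ≤ c.aW + k → W m ≤ SupDelI σ W F m := by
    intro k
    induction k with
    | zero =>
      intro m hm
      rw [c.haW m (by omega)]
      exact bot_le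
    | succ k ih =>
      intro m hm
      by_cases h : m ≤ c.aW + k
      · exact ih m h
      · have hih : W (m - 1) ≤ SupDelI σ W F (m - 1) := ih (m - 1) (by omega)
        have h1 : W m ≤ GrA W F m c.aF := by
          rw [GrA, c.haF c.aF le_rfl, top_inf_eq]
          exact le_sup_left
        refine h1.trans ((c.grA_dec m c.aF).trans
          (sup_le ?_ (hih.trans (c.supDelI_mono (by omega)))))
        refine iSup_le fun r => iSup_le fun _ => ?_
        refine (c.sur (n := m) (p := r) (q := m - r) (by omega) hih).trans
          (sup_le ?_ (hih.trans (c.supDelI_mono (by omega))))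
        exact le_biSup_of_prop (fun ab : ℤ × ℤ => DelI σ W F ab.1 ab.2) (r, m - r)
          (by show r + (m - r) ≤ m; omega)
  intro x hx
  exact key (n - c.aW).toNat n (by omega) hx

lemma zer {p q : ℤ} {x : M} (hx : x ∈ DelI σ W F p q) (hx' : x ∈ W (p + q - 1)) : x = 0 := by
  classical
  have hxF : x ∈ F p := c.delI_le_F p q hx
  obtain ⟨y, hy, e, he, hxye⟩ := Submodule.mem_sup.mp (c.delI_le_snd p q hx)
  obtain ⟨g, hgJ, hgsum⟩ := (Submodule.mem_iSup_iff_exists_finsupp _ _).mp he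
  have hpart : ∀ k : ℕ, x ∈ W (p + q - 1 - k) := by
    intro k
    induction k with
    | zero => simpa using hx'
    | succ k ih =>
      set m : ℤ := p + q - 1 - k with hm
      have hxA : x ∈ GrA W F m p := Submodule.mem_sup_left (Submodule.mem_inf.mpr ⟨hxF, ih⟩)
      have hsplit : ∑ j ∈ g.support.filter (fun j : ℕ => j < k), g j
          + ∑ j ∈ g.support.filter (fun j : ℕ => ¬ j < k), g j = e := by
        rw [Finset.sum_filter_add_sum_filter_not, ← hgsum, Finsupp.sum]
      have h1 : y + ∑ j ∈ g.support.filter (fun j : ℕ => j < k), g j ∈ FsD σ F (q - k) := by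
        refine add_mem (c.hFs (by omega) (Submodule.mem_inf.mp hy).1)
          (Submodule.sum_mem _ fun j hj => ?_)
        have hjk : (j : ℤ) < k := by exact_mod_cast (Finset.mem_filter.mp hj).2
        exact c.hFs (by omega) (Submodule.mem_inf.mp (hgJ j)).1
      have h2 : ∑ j ∈ g.support.filter (fun j : ℕ => ¬ j < k), g j ∈ W (m - 1) := by
        refine Submodule.sum_mem _ fun j hj => ?_
        have hjk : (k : ℤ) ≤ j := by exact_mod_cast Nat.le_of_not_lt (Finset.mem_filter.mp hj).2
        exact c.hWmono (by omega) (Submodule.mem_inf.mp (hgJ j)).2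
      have h1W : y + ∑ j ∈ g.support.filter (fun j : ℕ => j < k), g j ∈ W m := by
        have heq : y + ∑ j ∈ g.support.filter (fun j : ℕ => j < k), g j
            = x - ∑ j ∈ g.support.filter (fun j : ℕ => ¬ j < k), g j := by
          rw [← hxye, ← hsplit]; abel
        rw [heq]
        exact sub_mem ih (c.hWmono (by omega) h2)
      have hxB : x ∈ GrB σ W F m (q - k) := by
        have heq : x = (y + ∑ j ∈ g.support.filter (fun j : ℕ => j < k), g j)
            + ∑ j ∈ g.support.filter (fun j : ℕ => ¬ j < k), g j := by
          rw [← hxye, ← hsplit]; abel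
        rw [heq]
        exact add_mem (Submodule.mem_sup_left (Submodule.mem_inf.mpr ⟨h1, h1W⟩))
          (Submodule.mem_sup_right h2)
      have hfin := c.grAB_bot (n := m) (p := p) (q := q - k) (by omega)
        (Submodule.mem_inf.mpr ⟨hxA, hxB⟩)
      have em : m - 1 = p + q - 1 - ((k + 1 : ℕ) : ℤ) := by push_cast; omega
      rwa [em] at hfin
  have hfin := hpart (p + q - 1 - c.aW).toNat
  rw [c.haW _ (by omega)] at hfin
  simpa using hfin

lemma grd {n p : ℤ} :
    (GrA W F n p ⊓ GrB σ W F n (n - p)) ⊓ (GrA W F n (p + 1) ⊔ GrB σ W F n (n - p + 1)) ≤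
      W (n - 1) := by
  intro x hx
  obtain ⟨hxH, hxS⟩ := Submodule.mem_inf.mp hx
  obtain ⟨hxA, hxB⟩ := Submodule.mem_inf.mp hxH
  obtain ⟨u, hu, v, hv, huv⟩ := Submodule.mem_sup.mp hxS
  have hvA : v ∈ GrA W F n p := by
    have heq : v = x - u := by rw [← huv]; abel
    rw [heq]
    exact sub_mem hxA (c.grA_mono (by omega) hu)
  have hv1 : v ∈ W (n - 1) := c.hodge1 n p (Submodule.mem_inf.mpr ⟨hvA, hv⟩)
  have hxA1 : x ∈ GrA W F n (p + 1) := by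
    rw [← huv]
    exact add_mem hu (c.W_le_grA n (p + 1) hv1)
  exact c.grAB_bot (by omega : n + 1 ≤ (p + 1) + (n - p)) (Submodule.mem_inf.mpr ⟨hxA1, hxB⟩)

end DelCtx

namespace DelCtx

variable {M : Type*} [AddCommGroup M] [Module ℂ M]
variable {σ : M →ₛₗ[starRingEnd ℂ] M} {W F : ℤ → Submodule ℂ M} (c : DelCtx σ W F)

include c

lemma mem_grAB_sup_of_ne {N : ℤ} {ab₀ ab : ℤ × ℤ} (h0 : ab₀.1 + ab₀.2 = N)
    (hne : ab ≠ ab₀) (hwt : ab.1 + ab.2 ≤ N) {v : M} (hv : v ∈ DelI σ W F ab.1 ab.2) :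
    v ∈ GrA W F N (ab₀.1 + 1) ⊔ GrB σ W F N (ab₀.2 + 1) := by
  by_cases hlt : ab.1 + ab.2 ≤ N - 1
  · exact Submodule.mem_sup_left (c.W_le_grA N _ (c.hWmono (by omega) (c.delI_le_W _ _ hv)))
  · have hwtN : ab.1 + ab.2 = N := by omega
    by_cases h1 : ab₀.1 + 1 ≤ ab.1
    · refine Submodule.mem_sup_left ?_
      have h := c.delI_le_grA ab.1 ab.2 hv
      rw [hwtN] at h
      exact c.grA_mono h1 h
    · have hd : ab.1 ≠ ab₀.1 ∨ ab.2 ≠ ab₀.2 := by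
        by_contra hcon
        push_neg at hcon
        exact hne (Prod.ext hcon.1 hcon.2)
      have h2 : ab₀.2 + 1 ≤ ab.2 := by omega
      refine Submodule.mem_sup_right ?_
      have h := c.delI_le_grB ab.1 ab.2 hv
      rw [hwtN] at h
      exact c.grB_mono h2 h

lemma kill {N : ℤ} {ab₀ : ℤ × ℤ} (h0 : ab₀.1 + ab₀.2 = N) {z : M}
    (hz : z ∈ DelI σ W F ab₀.1 ab₀.2)
    (hzS : z ∈ GrA W F N (ab₀.1 + 1) ⊔ GrB σ W F N (ab₀.2 + 1)) : z = 0 := by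
  have hA : z ∈ GrA W F N ab₀.1 := by
    have h := c.delI_le_grA ab₀.1 ab₀.2 hz; rwa [h0] at h
  have hB : z ∈ GrB σ W F N (N - ab₀.1) := by
    have h := c.delI_le_grB ab₀.1 ab₀.2 hz
    rw [h0] at h
    rwa [show ab₀.2 = N - ab₀.1 by omega] at h
  have hzS' : z ∈ GrA W F N (ab₀.1 + 1) ⊔ GrB σ W F N (N - ab₀.1 + 1) := by
    rwa [show ab₀.2 + 1 = N - ab₀.1 + 1 by omega] at hzS
  have h1 : z ∈ W (N - 1) :=
    c.grd (Submodule.mem_inf.mpr ⟨Submodule.mem_inf.mpr ⟨hA, hB⟩, hzS'⟩)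
  exact c.zer hz (by rw [show ab₀.1 + ab₀.2 - 1 = N - 1 from by omega]; exact h1)

lemma indep : SubIndep (fun ab : ℤ × ℤ => DelI σ W F ab.1 ab.2) := by
  classical
  have main : ∀ k : ℕ, ∀ N : ℤ, N ≤ c.aW + k → ∀ pq : ℤ × ℤ, pq.1 + pq.2 ≤ N →
      ∀ x, x ∈ DelI σ W F pq.1 pq.2 → ∀ g : (ℤ × ℤ) →₀ M,
      (∀ ab, g ab ∈ DelI σ W F ab.1 ab.2) →
      (∀ ab, g ab ≠ 0 → ab ≠ pq ∧ ab.1 + ab.2 ≤ N) →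
      x = (g.sum fun _ v => v) → x = 0 := by
    intro k
    induction k with
    | zero =>
      intro N hN pq hpq x hx g _ _ _
      have hxw : x ∈ W (pq.1 + pq.2) := c.delI_le_W _ _ hx
      rw [c.haW _ (by omega)] at hxw
      simpa using hxw
    | succ k ih =>
      intro N hN pq hpq x hx g hg1 hg2 hsum
      by_cases hNk : N ≤ c.aW + k
      · exact ih N hNk pq hpq x hx g hg1 hg2 hsum
      set T := g.support.filter (fun ab : ℤ × ℤ => ab.1 + ab.2 = N) with hT
      set L := g.support.filter (fun ab : ℤ × ℤ => ¬ ab.1 + ab.2 = N) with hL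
      have hsplit : ∑ ab ∈ T, g ab + ∑ ab ∈ L, g ab = g.sum fun _ v => v := by
        rw [hT, hL, Finset.sum_filter_add_sum_filter_not]; rfl
      have hlowW : ∑ ab ∈ L, g ab ∈ W (N - 1) := by
        refine Submodule.sum_mem _ fun ab hab => ?_
        obtain ⟨habs, habn⟩ := Finset.mem_filter.mp hab
        have hwt := (hg2 ab (Finsupp.mem_support_iff.mp habs)).2
        exact c.hWmono (by omega) (c.delI_le_W _ _ (hg1 ab))
      by_cases hcase : pq.1 + pq.2 = N
      · have hS : x ∈ GrA W F N (pq.1 + 1) ⊔ GrB σ W F N (pq.2 + 1) := by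
          rw [hsum, ← hsplit]
          refine add_mem (Submodule.sum_mem _ fun ab hab => ?_)
            (Submodule.mem_sup_left (c.W_le_grA N _ hlowW))
          obtain ⟨habs, _⟩ := Finset.mem_filter.mp hab
          have hg := hg2 ab (Finsupp.mem_support_iff.mp habs)
          exact c.mem_grAB_sup_of_ne hcase hg.1 (by omega) (hg1 ab)
        exact c.kill hcase hx hS
      · have hT0 : ∀ ab ∈ T, g ab = 0 := by
          intro ab₀ hab₀
          obtain ⟨hab₀s, h0⟩ := Finset.mem_filter.mp hab₀
          refine c.kill h0 (hg1 ab₀) ?_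
          have heq : g ab₀ = x - ∑ ab ∈ L, g ab - ∑ ab ∈ T.erase ab₀, g ab := by
            rw [hsum, ← hsplit, ← Finset.add_sum_erase _ _ hab₀]; abel
          rw [heq]
          have hxW : x ∈ W (N - 1) := c.hWmono (by omega) (c.delI_le_W _ _ hx)
          refine sub_mem (sub_mem (Submodule.mem_sup_left (c.W_le_grA N _ hxW))
            (Submodule.mem_sup_left (c.W_le_grA N _ hlowW)))
            (Submodule.sum_mem _ fun ab hab => ?_)
          obtain ⟨habs, habn⟩ := Finset.mem_filter.mp (Finset.mem_of_mem_erase hab)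
          exact c.mem_grAB_sup_of_ne h0 (Finset.ne_of_mem_erase hab) (by omega) (hg1 ab)
        refine ih (N - 1) (by omega) pq (by omega) x hx g hg1 (fun ab hne => ?_) hsum
        refine ⟨(hg2 ab hne).1, ?_⟩
        have hwt := (hg2 ab hne).2
        by_contra hcon
        have hN' : ab.1 + ab.2 = N := by omega
        exact hne (hT0 ab (Finset.mem_filter.mpr ⟨Finsupp.mem_support_iff.mpr hne, hN'⟩))
  intro pq x hx hsup
  obtain ⟨g, hg1, hg2, hsum⟩ := mem_biSup_finsupp hsup
  set N : ℤ := pq.1 + pq.2 +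
    ((g.support.sup fun ab : ℤ × ℤ => (ab.1 + ab.2 - pq.1 - pq.2).toNat : ℕ) : ℤ) with hN
  have hb : ∀ ab : ℤ × ℤ, g ab ≠ 0 → ab.1 + ab.2 ≤ N := by
    intro ab hne
    have h1 : (ab.1 + ab.2 - pq.1 - pq.2).toNat ≤
        g.support.sup (fun ab : ℤ × ℤ => (ab.1 + ab.2 - pq.1 - pq.2).toNat) :=
      Finset.le_sup (f := fun ab : ℤ × ℤ => (ab.1 + ab.2 - pq.1 - pq.2).toNat)
        (Finsupp.mem_support_iff.mpr hne)
    have h2 := Int.self_le_toNat (ab.1 + ab.2 - pq.1 - pq.2)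
    omega
  exact main (N - c.aW).toNat N (by omega) pq (by omega) x hx g hg1
    (fun ab hne => ⟨hg2 ab hne, hb ab hne⟩) hsum.symm

lemma sigma_delI {p q : ℤ} {x : M} (hx : x ∈ DelI σ W F p q) :
    σ x ∈ DelI σ W F q p ⊔ W (p + q - 1) := by
  obtain ⟨y, hy, e, he, hyex⟩ := Submodule.mem_sup.mp (c.delI_le_snd p q hx)
  have hxF : x ∈ F p := c.delI_le_F p q hx
  have hxW : x ∈ W (p + q) := c.delI_le_W p q hx
  have hsx : σ x ∈ FsD σ F p ⊓ W (p + q) :=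
    Submodule.mem_inf.mpr ⟨⟨x, hxF, rfl⟩, c.hWs _ _ hxW⟩
  have hsy : σ y ∈ F q ⊓ W (p + q) := by
    obtain ⟨hy1, hy2⟩ := Submodule.mem_inf.mp hy
    obtain ⟨y', hy', hyy⟩ := hy1
    refine Submodule.mem_inf.mpr ⟨?_, c.hWs _ _ hy2⟩
    rw [← hyy, c.hs2 y']
    exact hy'
  have hse : σ e ∈ W (p + q - 2) := c.hWs _ _ (c.delIlow_le_W p q he)
  have hsA : σ x ∈ GrA W F (p + q) q := by
    rw [← hyex, map_add]
    exact add_mem (Submodule.mem_sup_left hsy)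
      (Submodule.mem_sup_right (c.hWmono (by omega) hse))
  have hsB : σ x ∈ GrB σ W F (p + q) p := Submodule.mem_sup_left hsx
  exact c.sur (n := p + q) (p := q) (q := p) (by omega) (c.wdec _)
    (Submodule.mem_inf.mpr ⟨hsA, hsB⟩)

lemma fdec (p : ℤ) : F p ≤ ⨆ ab : ℤ × ℤ, ⨆ (_ : p ≤ ab.1), DelI σ W F ab.1 ab.2 := by
  have key : ∀ k : ℕ, ∀ n : ℤ, n ≤ c.aW + k →
      F p ⊓ W n ≤ ⨆ ab : ℤ × ℤ, ⨆ (_ : p ≤ ab.1), DelI σ W F ab.1 ab.2 := by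
    intro k
    induction k with
    | zero =>
      intro n hn
      rw [c.haW n (by omega)]
      simp
    | succ k ih =>
      intro n hn
      by_cases h : n ≤ c.aW + k
      · exact ih n h
      intro x hx
      obtain ⟨hxF, hxW⟩ := Submodule.mem_inf.mp hx
      have hxA : x ∈ GrA W F n p := Submodule.mem_sup_left hx
      have hle : (⨆ r : ℤ, ⨆ (_ : p ≤ r), (GrA W F n r ⊓ GrB σ W F n (n - r)))
          ≤ (⨆ ab : ℤ × ℤ, ⨆ (_ : p ≤ ab.1), DelI σ W F ab.1 ab.2) ⊔ W (n - 1) := by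
        refine iSup_le fun r => iSup_le fun hr => ?_
        refine (c.sur (by omega) (c.wdec (n - 1))).trans (sup_le_sup_right ?_ _)
        exact le_biSup_of_prop (fun ab : ℤ × ℤ => DelI σ W F ab.1 ab.2) (r, n - r)
          (by show p ≤ r; exact hr)
      obtain ⟨u, hu, w, hw, huw⟩ :=
        Submodule.mem_sup.mp (((c.grA_dec n p).trans (sup_le hle le_sup_right)) hxA)
      have hSF : (⨆ ab : ℤ × ℤ, ⨆ (_ : p ≤ ab.1), DelI σ W F ab.1 ab.2) ≤ F p :=
        iSup_le fun ab => iSup_le fun hab => (c.delI_le_F ab.1 ab.2).trans (c.hFanti hab)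
      have hwFW : w ∈ F p ⊓ W (n - 1) := by
        have heq : w = x - u := by rw [← huw]; abel
        refine Submodule.mem_inf.mpr ⟨?_, hw⟩
        rw [heq]
        exact sub_mem hxF (hSF hu)
      have hwS := ih (n - 1) (by omega) hwFW
      rw [← huw]
      exact add_mem hu hwS
  intro x hx
  have hx' : x ∈ F p ⊓ W (max c.bW c.aW) :=
    Submodule.mem_inf.mpr ⟨hx, by rw [c.hbW _ (le_max_left _ _)]; trivial⟩
  exact key (max c.bW c.aW - c.aW).toNat _ (by omega) hx'

end DelCtx

section Converse

variable {M : Type*} [AddCommGroup M] [Module ℂ M]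

lemma map_inf_stab_eq (σ : M →ₛₗ[starRingEnd ℂ] M) (hs2 : ∀ x, σ (σ x) = x)
    (S T : Submodule ℂ M) (hT : ∀ x ∈ T, σ x ∈ T) :
    (S ⊓ T).map σ = S.map σ ⊓ T := by
  ext x
  constructor
  · rintro ⟨y, hy, rfl⟩
    exact Submodule.mem_inf.mpr ⟨⟨y, (Submodule.mem_inf.mp hy).1, rfl⟩,
      hT y (Submodule.mem_inf.mp hy).2⟩
  · rintro ⟨⟨y, hy, rfl⟩, hx2⟩
    refine ⟨y, Submodule.mem_inf.mpr ⟨hy, ?_⟩, rfl⟩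
    have h := hT _ hx2
    rwa [hs2] at h

theorem hodge_of_data (σ : M →ₛₗ[starRingEnd ℂ] M) (Wq Fq : ℤ → Submodule ℂ M)
    (J : ℤ × ℤ → Submodule ℂ M)
    (hs2 : ∀ x, σ (σ x) = x)
    (hWs : ∀ n x, x ∈ Wq n → σ x ∈ Wq n)
    (hind : SubIndep J)
    (hJW : ∀ n, Wq n = ⨆ ab : ℤ × ℤ, ⨆ (_ : ab.1 + ab.2 ≤ n), J ab)
    (hJF : ∀ p, Fq p = ⨆ ab : ℤ × ℤ, ⨆ (_ : p ≤ ab.1), J ab)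
    (hJσ : ∀ ab : ℤ × ℤ, ∀ x ∈ J ab, σ x ∈ J (ab.2, ab.1) ⊔ Wq (ab.1 + ab.2 - 1))
    (n p : ℤ) :
    ((Fq p ⊓ Wq n) ⊔ Wq (n - 1)) ⊓ (((Fq (n - p + 1) ⊓ Wq n).map σ) ⊔ Wq (n - 1)) = Wq (n - 1)
    ∧ (Fq p ⊓ Wq n) ⊔ ((Fq (n - p + 1) ⊓ Wq n).map σ) ⊔ Wq (n - 1) = Wq n := by
  classical
  have hWmono : ∀ {a b : ℤ}, a ≤ b → Wq a ≤ Wq b := fun {a b} hab => by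
    rw [hJW, hJW]; exact biSup_mono_prop _ fun ab h => h.trans hab
  have hJle_W : ∀ (ab : ℤ × ℤ) (m : ℤ), ab.1 + ab.2 ≤ m → J ab ≤ Wq m := fun ab m h => by
    rw [hJW]; exact le_biSup_of_prop J ab h
  have hJle_F : ∀ (ab : ℤ × ℤ) (r : ℤ), r ≤ ab.1 → J ab ≤ Fq r := fun ab r h => by
    rw [hJF]; exact le_biSup_of_prop J ab h
  constructor
  · apply le_antisymm
    · intro x hx
      obtain ⟨hx1, hx2⟩ := Submodule.mem_inf.mp hx
      have m1 : x ∈ ⨆ ab : ℤ × ℤ,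
          ⨆ (_ : (p ≤ ab.1 ∧ ab.1 + ab.2 ≤ n) ∨ ab.1 + ab.2 ≤ n - 1), J ab := by
        obtain ⟨x₁, hx₁, w, hwk, hxw⟩ := Submodule.mem_sup.mp hx1
        have hx₁' : x₁ ∈ ⨆ ab : ℤ × ℤ, ⨆ (_ : p ≤ ab.1 ∧ ab.1 + ab.2 ≤ n), J ab := by
          obtain ⟨hxF, hxW⟩ := Submodule.mem_inf.mp hx₁
          rw [hJF] at hxF; rw [hJW] at hxW
          exact hind.inf_biSup hxF hxW
        rw [← hxw]
        refine add_mem (mem_biSup_mono (fun ab h => Or.inl h) hx₁') ?_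
        rw [hJW] at hwk
        exact mem_biSup_mono (fun ab h => Or.inr h) hwk
      have m2 : x ∈ ⨆ ab : ℤ × ℤ,
          ⨆ (_ : (n - p + 1 ≤ ab.2 ∧ ab.1 + ab.2 ≤ n) ∨ ab.1 + ab.2 ≤ n - 1), J ab := by
        obtain ⟨x₂, hx₂, w, hwk, hxw⟩ := Submodule.mem_sup.mp hx2
        rw [← hxw]
        refine add_mem ?_
          (by rw [hJW] at hwk; exact mem_biSup_mono (fun ab h => Or.inr h) hwk)
        obtain ⟨y, hy, rfl⟩ := hx₂
        have hy' : y ∈ ⨆ ab : ℤ × ℤ, ⨆ (_ : n - p + 1 ≤ ab.1 ∧ ab.1 + ab.2 ≤ n), J ab := by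
          obtain ⟨hyF, hyW⟩ := Submodule.mem_inf.mp hy
          rw [hJF] at hyF; rw [hJW] at hyW
          exact hind.inf_biSup hyF hyW
        obtain ⟨g, hg1, hg2, hgsum⟩ := mem_biSup_finsupp hy'
        rw [← hgsum, Finsupp.sum, map_sum]
        refine Submodule.sum_mem _ fun ab hab => ?_
        have hcond := hg2 ab (Finsupp.mem_support_iff.mp hab)
        have hmem := hJσ ab (g ab) (hg1 ab)
        have hWle : Wq (ab.1 + ab.2 - 1) ≤ ⨆ ab : ℤ × ℤ,
            ⨆ (_ : (n - p + 1 ≤ ab.2 ∧ ab.1 + ab.2 ≤ n) ∨ ab.1 + ab.2 ≤ n - 1), J ab := by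
          refine (hWmono (by omega : ab.1 + ab.2 - 1 ≤ n - 1)).trans ?_
          rw [hJW]
          exact biSup_mono_prop _ fun ab h => Or.inr h
        have hJle : J (ab.2, ab.1) ≤ ⨆ ab : ℤ × ℤ,
            ⨆ (_ : (n - p + 1 ≤ ab.2 ∧ ab.1 + ab.2 ≤ n) ∨ ab.1 + ab.2 ≤ n - 1), J ab := by
          refine le_biSup_of_prop J (ab.2, ab.1) (Or.inl ⟨hcond.1, ?_⟩)
          show ab.2 + ab.1 ≤ n
          omega
        exact (sup_le hJle hWle) hmem
      have m3 := hind.inf_biSup m1 m2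
      have m4 : x ∈ ⨆ ab : ℤ × ℤ, ⨆ (_ : ab.1 + ab.2 ≤ n - 1), J ab :=
        mem_biSup_mono (fun ab h => by rcases h with ⟨h1 | h1, h2 | h2⟩ <;> omega) m3
      rw [hJW (n - 1)]
      exact m4
    · exact le_inf le_sup_right le_sup_right
  · apply le_antisymm
    · refine sup_le (sup_le inf_le_right ?_) (hWmono (by omega))
      rintro x ⟨y, hy, rfl⟩
      exact hWs n y (Submodule.mem_inf.mp hy).2
    · intro x hx
      rw [hJW n] at hx
      obtain ⟨g, hg1, hg2, hgsum⟩ := mem_biSup_finsupp hx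
      rw [← hgsum, Finsupp.sum]
      refine Submodule.sum_mem _ fun ab hab => ?_
      have hwt := hg2 ab (Finsupp.mem_support_iff.mp hab)
      by_cases hlow : ab.1 + ab.2 ≤ n - 1
      · exact Submodule.mem_sup_right ((hJle_W ab (n - 1) hlow) (hg1 ab))
      by_cases hps : p ≤ ab.1
      · exact Submodule.mem_sup_left (Submodule.mem_sup_left (Submodule.mem_inf.mpr
          ⟨hJle_F ab p hps (hg1 ab), hJle_W ab n hwt (hg1 ab)⟩))
      · push_neg at hps
        have hb : n - p + 1 ≤ ab.2 := by omega
        have hσv := hJσ ab (g ab) (hg1 ab)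
        obtain ⟨u, hu, w, hw, huw⟩ := Submodule.mem_sup.mp hσv
        have hval : g ab = σ u + σ w := by
          have h := congrArg σ huw
          rw [map_add, hs2] at h
          exact h.symm
        rw [hval]
        refine add_mem ?_ ?_
        · refine Submodule.mem_sup_left (Submodule.mem_sup_right ⟨u, ?_, rfl⟩)
          refine Submodule.mem_inf.mpr ⟨hJle_F (ab.2, ab.1) (n - p + 1) ?_ hu,
            hJle_W (ab.2, ab.1) n ?_ hu⟩
          · show n - p + 1 ≤ ab.2; exact hb
          · show ab.2 + ab.1 ≤ n; omega
        · exact Submodule.mem_sup_right (hWs _ w ((hWmono (by omega)) hw))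

end Converse

section Functorial

lemma delI_map_le {M N : Type*} [AddCommGroup M] [Module ℂ M] [AddCommGroup N] [Module ℂ N]
    (σM : M →ₛₗ[starRingEnd ℂ] M) (σN : N →ₛₗ[starRingEnd ℂ] N) (g : M →ₗ[ℂ] N)
    (hg : ∀ x, g (σM x) = σN (g x))
    (WM FM : ℤ → Submodule ℂ M) (WN FN : ℤ → Submodule ℂ N)
    (hgW : ∀ n, (WM n).map g ≤ WN n) (hgF : ∀ r, (FM r).map g ≤ FN r) (p q : ℤ) :
    (DelI σM WM FM p q).map g ≤ DelI σN WN FN p q := by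
  intro x hx
  obtain ⟨u, hu, rfl⟩ := hx
  obtain ⟨hu1, hu2⟩ := Submodule.mem_inf.mp hu
  obtain ⟨huF, huW⟩ := Submodule.mem_inf.mp hu1
  refine Submodule.mem_inf.mpr ⟨Submodule.mem_inf.mpr
    ⟨hgF p ⟨u, huF, rfl⟩, hgW _ ⟨u, huW, rfl⟩⟩, ?_⟩
  obtain ⟨y, hy, e, he, hye⟩ := Submodule.mem_sup.mp hu2
  have hgy : g y ∈ FsD σN FN q ⊓ WN (p + q) := by
    obtain ⟨hy1, hy2⟩ := Submodule.mem_inf.mp hy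
    obtain ⟨y', hy', rfl⟩ := hy1
    refine Submodule.mem_inf.mpr ⟨?_, hgW _ ⟨_, hy2, rfl⟩⟩
    exact ⟨g y', hgF q ⟨y', hy', rfl⟩, (hg y').symm⟩
  have hge : g e ∈ DelIlow σN WN FN p q := by
    obtain ⟨f, hf1, hfsum⟩ := (Submodule.mem_iSup_iff_exists_finsupp _ _).mp he
    rw [← hfsum, Finsupp.sum, map_sum]
    refine Submodule.sum_mem _ fun j _ => ?_
    obtain ⟨hj1, hj2⟩ := Submodule.mem_inf.mp (hf1 j)
    refine Submodule.mem_iSup_of_mem j (Submodule.mem_inf.mpr ⟨?_, hgW _ ⟨f j, hj2, rfl⟩⟩)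
    obtain ⟨z, hz, hzz⟩ := hj1
    exact ⟨g z, hgF _ ⟨z, hz, rfl⟩, by rw [← hzz, hg]⟩
  rw [← hye, map_add]
  exact add_mem (Submodule.mem_sup_left hgy) (Submodule.mem_sup_right hge)

end Functorial

section Assembly

/-- Build a Deligne context from a mixed Hodge structure. -/
noncomputable def delCtx_of_MHS {U : Type*} [AddCommGroup U] [Module ℝ U]
    {W : ℤ → Submodule ℝ U} {F : ℤ → Submodule ℂ (ℂ ⊗[ℝ] U)}
    (h : IsMixedHodgeStructure U W F) :
    DelCtx (sigmaC U) (fun n => (W n).baseChange ℂ) F where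
  hs2 := sigmaC_invol
  hWs := fun _ _ hx => sigmaC_mem_baseChange hx
  hWmono := fun _ _ hnm => baseChange_mono' (h.1 hnm)
  hFanti := fun _ _ hpq => (antitone_int_of_succ_le h.2.2.2.1) hpq
  aW := h.2.1.choose
  haW := fun n hn => by rw [h.2.1.choose_spec n hn, Submodule.baseChange_bot]
  bW := h.2.2.1.choose
  hbW := fun n hn => by rw [h.2.2.1.choose_spec n hn, Submodule.baseChange_top]
  bF := h.2.2.2.2.2.1.choose
  hbF := fun p hp => h.2.2.2.2.2.1.choose_spec p hp
  aF := h.2.2.2.2.1.choose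
  haF := fun p hp => h.2.2.2.2.1.choose_spec p hp
  hodge1 := fun n p => by
    have hh := (h.2.2.2.2.2.2 n p).1
    rw [map_inf_stab_eq (sigmaC U) sigmaC_invol _ _
      (fun x hx => sigmaC_mem_baseChange hx)] at hh
    simp only [GrA, GrB, FsD]
    exact le_of_eq hh
  hodge2 := fun n p => by
    have hh := (h.2.2.2.2.2.2 n p).2
    rw [map_inf_stab_eq (sigmaC U) sigmaC_invol _ _
      (fun x hx => sigmaC_mem_baseChange hx), sup_assoc] at hh
    simp only [FsD]
    exact le_of_eq hh.symm

theorem mhs_cokernel' (V V' : Type*)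
    [AddCommGroup V] [Module ℝ V] [FiniteDimensional ℝ V]
    [AddCommGroup V'] [Module ℝ V'] [FiniteDimensional ℝ V']
    (W : ℤ → Submodule ℝ V) (F : ℤ → Submodule ℂ (ℂ ⊗[ℝ] V))
    (W' : ℤ → Submodule ℝ V') (F' : ℤ → Submodule ℂ (ℂ ⊗[ℝ] V'))
    (hWF : IsMixedHodgeStructure V W F) (hWF' : IsMixedHodgeStructure V' W' F')
    (f : V →ₗ[ℝ] V')
    (hfW : ∀ n : ℤ, (W n).map f ≤ W' n)
    (hfF : ∀ p : ℤ, (F p).map (f.baseChange ℂ) ≤ F' p) :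
    IsMixedHodgeStructure (V' ⧸ LinearMap.range f)
      (fun n => (W' n).map (LinearMap.range f).mkQ)
      (fun p => (F' p).map ((LinearMap.range f).mkQ.baseChange ℂ)) := by
  classical
  have cV : DelCtx (sigmaC V) (fun n => (W n).baseChange ℂ) F := delCtx_of_MHS hWF
  have cV' : DelCtx (sigmaC V') (fun n => (W' n).baseChange ℂ) F' := delCtx_of_MHS hWF'
  -- decompositions on V'
  have weq' : ∀ n : ℤ, ((W' n).baseChange ℂ)
      = SupDelI (sigmaC V') (fun m => (W' m).baseChange ℂ) F' n := by
    intro n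
    refine le_antisymm (cV'.wdec n) ?_
    exact iSup_le fun ab => iSup_le fun h => (cV'.delI_le_W ab.1 ab.2).trans (cV'.hWmono h)
  have feq' : ∀ p : ℤ, F' p = ⨆ ab : ℤ × ℤ, ⨆ (_ : p ≤ ab.1),
      DelI (sigmaC V') (fun m => (W' m).baseChange ℂ) F' ab.1 ab.2 := by
    intro p
    refine le_antisymm (cV'.fdec p) ?_
    exact iSup_le fun ab => iSup_le fun h => (cV'.delI_le_F ab.1 ab.2).trans (cV'.hFanti h)
  -- J data
  have hJW : ∀ n : ℤ, ((W' n).map (LinearMap.range f).mkQ).baseChange ℂ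
      = ⨆ ab : ℤ × ℤ, ⨆ (_ : ab.1 + ab.2 ≤ n),
        (DelI (sigmaC V') (fun m => (W' m).baseChange ℂ) F' ab.1 ab.2).map
          ((LinearMap.range f).mkQ.baseChange ℂ) := by
    intro n
    rw [baseChange_map_comm, weq' n, SupDelI, map_biSup]
  have hJF : ∀ p : ℤ, (F' p).map ((LinearMap.range f).mkQ.baseChange ℂ)
      = ⨆ ab : ℤ × ℤ, ⨆ (_ : p ≤ ab.1),
        (DelI (sigmaC V') (fun m => (W' m).baseChange ℂ) F' ab.1 ab.2).map
          ((LinearMap.range f).mkQ.baseChange ℂ) := by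
    intro p
    rw [feq' p, map_biSup]
  have hJσ : ∀ ab : ℤ × ℤ, ∀ x ∈
      (DelI (sigmaC V') (fun m => (W' m).baseChange ℂ) F' ab.1 ab.2).map
        ((LinearMap.range f).mkQ.baseChange ℂ),
      sigmaC (V' ⧸ LinearMap.range f) x ∈
        (DelI (sigmaC V') (fun m => (W' m).baseChange ℂ) F' ab.2 ab.1).map
          ((LinearMap.range f).mkQ.baseChange ℂ)
        ⊔ ((W' (ab.1 + ab.2 - 1)).map (LinearMap.range f).mkQ).baseChange ℂ := by
    intro ab x hx
    obtain ⟨u, hu, rfl⟩ := hx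
    have h1 := cV'.sigma_delI (p := ab.1) (q := ab.2) hu
    rw [sigmaC_baseChange_comm]
    obtain ⟨v, hv, w, hw, hvw⟩ := Submodule.mem_sup.mp h1
    rw [← hvw, map_add]
    refine add_mem (Submodule.mem_sup_left ⟨v, hv, rfl⟩) (Submodule.mem_sup_right ?_)
    rw [baseChange_map_comm]
    exact ⟨w, hw, rfl⟩
  -- functoriality and independence
  have hgW : ∀ n : ℤ, ((W n).baseChange ℂ).map (f.baseChange ℂ) ≤ (W' n).baseChange ℂ := by
    intro n
    rw [← baseChange_map_comm]
    exact baseChange_mono' (hfW n)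
  have hK : ∀ ab : ℤ × ℤ,
      (DelI (sigmaC V) (fun m => (W m).baseChange ℂ) F ab.1 ab.2).map (f.baseChange ℂ)
        ≤ DelI (sigmaC V') (fun m => (W' m).baseChange ℂ) F' ab.1 ab.2 :=
    fun ab => delI_map_le (sigmaC V) (sigmaC V') (f.baseChange ℂ)
      (fun x => (sigmaC_baseChange_comm f x).symm) _ F _ F' hgW hfF ab.1 ab.2
  have hind : SubIndep (fun ab : ℤ × ℤ =>
      (DelI (sigmaC V') (fun m => (W' m).baseChange ℂ) F' ab.1 ab.2).map
        ((LinearMap.range f).mkQ.baseChange ℂ)) := by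
    refine SubIndep.map_of_ker cV'.indep ((LinearMap.range f).mkQ.baseChange ℂ)
      (fun ab => (DelI (sigmaC V) (fun m => (W m).baseChange ℂ) F ab.1 ab.2).map
        (f.baseChange ℂ)) hK ?_ ?_
    · rw [ker_baseChange_mkQ f]
      rintro x ⟨u, rfl⟩
      have hu : u ∈ Submodule.baseChange ℂ (W cV.bW) := by
        have hb := cV.hbW cV.bW le_rfl
        rw [hb]; trivial
      have htop := cV.wdec cV.bW hu
      rw [SupDelI] at htop
      have htop2 := Submodule.mem_map_of_mem (f := f.baseChange ℂ) htop
      rw [map_biSup] at htop2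
      exact (iSup_le fun ab => iSup_le fun _ =>
        le_iSup (fun ab : ℤ × ℤ =>
          (DelI (sigmaC V) (fun m => (W m).baseChange ℂ) F ab.1 ab.2).map
            (f.baseChange ℂ)) ab) htop2
    · intro ab
      rw [ker_baseChange_mkQ f]
      rintro x ⟨u, _, rfl⟩
      exact ⟨u, rfl⟩
  -- assemble
  obtain ⟨hWm', ⟨a1', ha1'⟩, ⟨b1', hb1'⟩, hFstep', ⟨a2', ha2'⟩, ⟨b2', hb2'⟩, _⟩ := hWF'
  refine ⟨?_, ?_, ?_, ?_, ?_, ?_, ?_⟩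
  · exact fun n m h => Submodule.map_mono (hWm' h)
  · exact ⟨a1', fun n hn => by
      show Submodule.map (LinearMap.range f).mkQ (W' n) = ⊥
      rw [ha1' n hn, Submodule.map_bot]⟩
  · exact ⟨b1', fun n hn => by
      show Submodule.map (LinearMap.range f).mkQ (W' n) = ⊤
      rw [hb1' n hn, Submodule.map_top, Submodule.range_mkQ]⟩
  · exact fun p => Submodule.map_mono (hFstep' p)
  · refine ⟨a2', fun p hp => ?_⟩
    show Submodule.map ((LinearMap.range f).mkQ.baseChange ℂ) (F' p) = ⊤
    rw [ha2' p hp, Submodule.map_top]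
    exact LinearMap.range_eq_top.mpr (baseChange_surj _ (Submodule.mkQ_surjective _))
  · exact ⟨b2', fun p hp => by
      show Submodule.map ((LinearMap.range f).mkQ.baseChange ℂ) (F' p) = ⊥
      rw [hb2' p hp, Submodule.map_bot]⟩
  · intro n p
    exact hodge_of_data (sigmaC (V' ⧸ LinearMap.range f))
      (fun m => ((W' m).map (LinearMap.range f).mkQ).baseChange ℂ)
      (fun r => (F' r).map ((LinearMap.range f).mkQ.baseChange ℂ))
      (fun ab => (DelI (sigmaC V') (fun m => (W' m).baseChange ℂ) F' ab.1 ab.2).map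
        ((LinearMap.range f).mkQ.baseChange ℂ))
      sigmaC_invol (fun _ _ hx => sigmaC_mem_baseChange hx) hind hJW hJF hJσ n p

end Assembly

/-- cokernels. Let `f` be a morphism of mixed Hodge structures
`(V, W, F) → (V', W', F')`, let `Q := V' / f(V)` with quotient map `π`, and identify
`Q_ℂ` with `V'_ℂ / f_ℂ(V_ℂ)`, with quotient map `π_ℂ` the base change of `π`. Then the
induced filtrations `W^Q_n := π(W'_n)` and `F^p_Q := π_ℂ(F'^p)` define a mixed Hodge
structure on `Q`. -/
theorem mhs_cokernel (V V' : Type*)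
    [AddCommGroup V] [Module ℝ V] [FiniteDimensional ℝ V]
    [AddCommGroup V'] [Module ℝ V'] [FiniteDimensional ℝ V']
    (W : ℤ → Submodule ℝ V) (F : ℤ → Submodule ℂ (ℂ ⊗[ℝ] V))
    (W' : ℤ → Submodule ℝ V') (F' : ℤ → Submodule ℂ (ℂ ⊗[ℝ] V'))
    (hWF : IsMixedHodgeStructure V W F) (hWF' : IsMixedHodgeStructure V' W' F')
    (f : V →ₗ[ℝ] V')
    (hfW : ∀ n : ℤ, (W n).map f ≤ W' n)
    (hfF : ∀ p : ℤ, (F p).map (f.baseChange ℂ) ≤ F' p) :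
    IsMixedHodgeStructure (V' ⧸ LinearMap.range f)
      (fun n => (W' n).map (LinearMap.range f).mkQ)
      (fun p => (F' p).map ((LinearMap.range f).mkQ.baseChange ℂ)) := by
  exact mhs_cokernel' V V' W F W' F' hWF hWF' f hfW hfF
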